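/- Let r = 2s with s ≥ 1 and let R = ℂ[T₁,…,T_r] L be the free ℂ[T₁,…,T_r]-module on one generator L. The λ-bracket determined on the generator by [L_λ L] = Σ_{i=1}^s (λ_{s+i} T_i L − λ_i T_{s+i} L), extended by conformal sesquilinearity, makes R an r-dimensional Lie conformal algebra. -/

import Mathlib

open Finsupp MvPolynomial
open scoped TensorProduct

namespace CA

noncomputable section

variable (r : ℕ) (R : Type*) [AddCommGroup R] [Module ℂ R]
  [Module (MvPolynomial (Fin r) ℂ) R] [IsScalarTower ℂ (MvPolynomial (Fin r) ℂ) R]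

/-- Polynomials in `r` variables (the `λ`'s) with coefficients in `R`,
encoded via exponent multi-indices. -/
abbrev VP : Type _ := (Fin r →₀ ℕ) →₀ R

/-- Polynomials in two families of `r` variables (`λ`'s = `Sum.inl`, `μ`'s = `Sum.inr`)
with coefficients in `R`. -/
abbrev BP : Type _ := ((Fin r ⊕ Fin r) →₀ ℕ) →₀ R

/-- The action of `T i` on `R`, as a `ℂ`-linear endomorphism. -/
def tAct (i : Fin r) : R →ₗ[ℂ] R where
  toFun v := (X i : MvPolynomial (Fin r) ℂ) • v
  map_add' u v := smul_add _ u v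
  map_smul' c v := by
    simp only [RingHom.id_apply]
    rw [← algebraMap_smul (MvPolynomial (Fin r) ℂ) c v, ← mul_smul, mul_comm, mul_smul,
      algebraMap_smul]

/-- Multiplication by the variable `λ i` on `VP`. -/
def vLam (i : Fin r) : Module.End ℂ (VP r R) :=
  Finsupp.lmapDomain R ℂ (· + Finsupp.single i 1)

/-- The action of `T i` on the coefficients of an element of `VP`. -/
def vT (i : Fin r) : Module.End ℂ (VP r R) :=
  Finsupp.mapRange.linearMap (tAct r R i)

/-- The substitution `λ ↦ -λ - T` on `VP`. -/
def vNeg (F : VP r R) : VP r R :=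
  F.sum fun k v =>
    ((List.ofFn fun i : Fin r => (-(vLam r R i) - vT r R i) ^ (k i)).prod)
      (Finsupp.single 0 v)

/-- Multiplication by the monomial with exponent `e` on `BP`. -/
def bShift (e : (Fin r ⊕ Fin r) →₀ ℕ) : Module.End ℂ (BP r R) :=
  Finsupp.lmapDomain R ℂ (· + e)

/-- Multiplication by `λ i` on `BP`. -/
def bLam (i : Fin r) : Module.End ℂ (BP r R) := bShift r R (Finsupp.single (Sum.inl i) 1)

/-- Multiplication by `μ i` on `BP`. -/
def bMu (i : Fin r) : Module.End ℂ (BP r R) := bShift r R (Finsupp.single (Sum.inr i) 1)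

/-- The action of `T i` on the coefficients of an element of `BP`. -/
def bT (i : Fin r) : Module.End ℂ (BP r R) :=
  Finsupp.mapRange.linearMap (tAct r R i)

/-- Evaluation of an element of `VP` at a (commuting) family `s` of operators on `BP`:
`Σ_k λ^k v_k ↦ Σ_k s^k (v_k)`. -/
def ev (s : Fin r → Module.End ℂ (BP r R)) (F : VP r R) : BP r R :=
  F.sum fun k v => ((List.ofFn fun i : Fin r => (s i) ^ (k i)).prod) (Finsupp.single 0 v)

/-- Extension of a `λ`-product `p` to a polynomial first argument, evaluated at the
family of operators `s`:  `(Σ_e x^e v_e)_s b = Σ_e x^e · (p v_e b)(s)`. -/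
def evL (p : R → R → VP r R) (s : Fin r → Module.End ℂ (BP r R)) (F : BP r R) (b : R) :
    BP r R :=
  F.sum fun e v => bShift r R e (ev r R s (p v b))

/-- Extension of a `λ`-product `p` to a polynomial second argument, evaluated at the
family of operators `s`:  `a_s (Σ_e x^e w_e) = Σ_e x^e · (p a w_e)(s)`. -/
def evR (p : R → R → VP r R) (s : Fin r → Module.End ℂ (BP r R)) (a : R) (G : BP r R) :
    BP r R :=
  G.sum fun e w => bShift r R e (ev r R s (p a w))

/-- The family `λ`. -/
def FL : Fin r → Module.End ℂ (BP r R) := fun i => bLam r R i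
/-- The family `μ`. -/
def FM : Fin r → Module.End ℂ (BP r R) := fun i => bMu r R i
/-- The family `λ + μ`. -/
def FLM : Fin r → Module.End ℂ (BP r R) := fun i => bLam r R i + bMu r R i
/-- The family `-λ - T`. -/
def FNL : Fin r → Module.End ℂ (BP r R) := fun i => -(bLam r R i) - bT r R i
/-- The family `-μ - T`. -/
def FNM : Fin r → Module.End ℂ (BP r R) := fun i => -(bMu r R i) - bT r R i
/-- The family `-λ - μ - T`. -/
def FNLM : Fin r → Module.End ℂ (BP r R) := fun i => -(bLam r R i) - bMu r R i - bT r R i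

/-- The sign `(-1)^(αβ)` for parities `α β : ZMod 2`. -/
def sgn (α β : ZMod 2) : ℤ := (-1) ^ (α.val * β.val)

/-- `ℂ`-bilinearity of a `λ`-product. -/
def Bilin (p : R → R → VP r R) : Prop :=
  (∀ a b c : R, p (a + b) c = p a c + p b c) ∧
  (∀ a b c : R, p a (b + c) = p a b + p a c) ∧
  (∀ (z : ℂ) (a b : R), p (z • a) b = z • p a b) ∧
  (∀ (z : ℂ) (a b : R), p a (z • b) = z • p a b)

/-- A `λ`-product is parity-preserving w.r.t. a grading `G`. -/
def ParityPres (G : ZMod 2 → Submodule ℂ R) (p : R → R → VP r R) : Prop :=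
  ∀ (α β : ZMod 2) (a b : R), a ∈ G α → b ∈ G β → ∀ k, p a b k ∈ G (α + β)

/-- Conformal sesquilinearity: `(T_i a)_λ b = -λ_i (a_λ b)` and
`a_λ (T_i b) = (T_i + λ_i)(a_λ b)`. -/
def Sesq (p : R → R → VP r R) : Prop :=
  ∀ (i : Fin r) (a b : R),
    p ((X i : MvPolynomial (Fin r) ℂ) • a) b = (-(vLam r R i)) (p a b) ∧
    p a ((X i : MvPolynomial (Fin r) ℂ) • b) = (vT r R i + vLam r R i) (p a b)

/-- `G` is a `ℤ/2ℤ`-grading of the `ℂ[T]`-module `R`. -/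
def IsGraded (G : ZMod 2 → Submodule ℂ R) : Prop :=
  DirectSum.IsInternal G ∧
  ∀ (i : Fin r) (α : ZMod 2) (v : R), v ∈ G α →
    (X i : MvPolynomial (Fin r) ℂ) • v ∈ G α

/-- Conformal skew-symmetry `[a_λ b] = -(-1)^{αβ} [b_{-λ-T} a]`. -/
def Skew (G : ZMod 2 → Submodule ℂ R) (q : R → R → VP r R) : Prop :=
  ∀ (α β : ZMod 2) (a b : R), a ∈ G α → b ∈ G β →
    q a b = -(sgn α β • vNeg r R (q b a))

/-- Conformal Jacobi identity
`[a_λ [b_μ c]] = [[a_λ b]_{λ+μ} c] + (-1)^{αβ} [b_μ [a_λ c]]`. -/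
def Jacobi (G : ZMod 2 → Submodule ℂ R) (q : R → R → VP r R) : Prop :=
  ∀ (α β : ZMod 2) (a b c : R), a ∈ G α → b ∈ G β →
    evR r R q (FL r R) a (ev r R (FM r R) (q b c)) =
      evL r R q (FLM r R) (ev r R (FL r R) (q a b)) c +
      sgn α β • evR r R q (FM r R) b (ev r R (FL r R) (q a c))

/-- `q` is an `r`-dimensional Lie conformal superalgebra `λ`-bracket on `R` graded by `G`. -/
def IsLieConfSuper (G : ZMod 2 → Submodule ℂ R) (q : R → R → VP r R) : Prop :=
  Bilin r R q ∧ ParityPres r R G q ∧ Sesq r R q ∧ Skew r R G q ∧ Jacobi r R G q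

/-- Left Novikov conformal identity
`(a_λ b)_{λ+μ} c - a_λ (b_μ c) = (-1)^{αβ} ((b_μ a)_{λ+μ} c - b_μ (a_λ c))`. -/
def NovLeft1 (G : ZMod 2 → Submodule ℂ R) (p : R → R → VP r R) : Prop :=
  ∀ (α β : ZMod 2) (a b c : R), a ∈ G α → b ∈ G β →
    evL r R p (FLM r R) (ev r R (FL r R) (p a b)) c -
      evR r R p (FL r R) a (ev r R (FM r R) (p b c)) =
    sgn α β • (evL r R p (FLM r R) (ev r R (FM r R) (p b a)) c -
      evR r R p (FM r R) b (ev r R (FL r R) (p a c)))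

/-- Left Novikov conformal identity `(a_λ b)_{λ+μ} c = (-1)^{βγ} (a_λ c)_{-μ-T} b`. -/
def NovLeft2 (G : ZMod 2 → Submodule ℂ R) (p : R → R → VP r R) : Prop :=
  ∀ (β γ : ZMod 2) (a b c : R), b ∈ G β → c ∈ G γ →
    evL r R p (FLM r R) (ev r R (FL r R) (p a b)) c =
      sgn β γ • evL r R p (FNM r R) (ev r R (FL r R) (p a c)) b

/-- `p` is an `r`-dimensional (left) Novikov conformal superalgebra `λ`-product. -/
def IsNovLeft (G : ZMod 2 → Submodule ℂ R) (p : R → R → VP r R) : Prop :=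
  Bilin r R p ∧ ParityPres r R G p ∧ Sesq r R p ∧ NovLeft1 r R G p ∧ NovLeft2 r R G p

/-- Right Novikov conformal identity
`a_λ (b_μ c) - (a_λ b)_{λ+μ} c = (-1)^{βγ} (a_λ (c_{-μ-T} b) - (a_λ c)_{-μ-T} b)`. -/
def NovRight1 (G : ZMod 2 → Submodule ℂ R) (p : R → R → VP r R) : Prop :=
  ∀ (β γ : ZMod 2) (a b c : R), b ∈ G β → c ∈ G γ →
    evR r R p (FL r R) a (ev r R (FM r R) (p b c)) -
      evL r R p (FLM r R) (ev r R (FL r R) (p a b)) c =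
    sgn β γ • (evR r R p (FL r R) a (ev r R (FNM r R) (p c b)) -
      evL r R p (FNM r R) (ev r R (FL r R) (p a c)) b)

/-- Right Novikov conformal identity `a_λ (b_μ c) = (-1)^{αβ} b_μ (a_λ c)`. -/
def NovRight2 (G : ZMod 2 → Submodule ℂ R) (p : R → R → VP r R) : Prop :=
  ∀ (α β : ZMod 2) (a b c : R), a ∈ G α → b ∈ G β →
    evR r R p (FL r R) a (ev r R (FM r R) (p b c)) =
      sgn α β • evR r R p (FM r R) b (ev r R (FL r R) (p a c))

/-- `p` is an `r`-dimensional right Novikov conformal superalgebra `λ`-product. -/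
def IsNovRight (G : ZMod 2 → Submodule ℂ R) (p : R → R → VP r R) : Prop :=
  Bilin r R p ∧ ParityPres r R G p ∧ Sesq r R p ∧ NovRight1 r R G p ∧ NovRight2 r R G p

/-- The compatibility condition of a super Gel'fand-Dorfman conformal bialgebra:
`[(a_{-μ-T} b)_{-λ-T} c] + [a_{-μ-T} b]_{-λ-T} c - a_{-λ-μ-T} [b_{-λ-T} c]`
`- (-1)^{βγ} [(a_{-λ-T} c)_{-μ-T} b] - (-1)^{βγ} [a_{-λ-T} c]_{-μ-T} b = 0`. -/
def GDCompat (G : ZMod 2 → Submodule ℂ R) (p q : R → R → VP r R) : Prop :=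
  ∀ (β γ : ZMod 2) (a b c : R), b ∈ G β → c ∈ G γ →
    evL r R q (FNL r R) (ev r R (FNM r R) (p a b)) c +
    evL r R p (FNL r R) (ev r R (FNM r R) (q a b)) c -
    evR r R p (FNLM r R) a (ev r R (FNL r R) (q b c)) -
    sgn β γ • evL r R q (FNM r R) (ev r R (FNL r R) (p a c)) b -
    sgn β γ • evL r R p (FNM r R) (ev r R (FNL r R) (q a c)) b = 0

/-- `(R, p, q)` is an `r`-dimensional super Gel'fand-Dorfman conformal bialgebra. -/
def IsGDConf (G : ZMod 2 → Submodule ℂ R) (p q : R → R → VP r R) : Prop :=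
  IsNovLeft r R G p ∧ IsLieConfSuper r R G q ∧ GDCompat r R G p q

/-! Ungraded (purely even) versions. -/

def Skew' (q : R → R → VP r R) : Prop :=
  ∀ a b : R, q a b = -(vNeg r R (q b a))

def Jacobi' (q : R → R → VP r R) : Prop :=
  ∀ a b c : R,
    evR r R q (FL r R) a (ev r R (FM r R) (q b c)) =
      evL r R q (FLM r R) (ev r R (FL r R) (q a b)) c +
      evR r R q (FM r R) b (ev r R (FL r R) (q a c))

/-- `q` is an `r`-dimensional Lie conformal algebra `λ`-bracket on `R`. -/
def IsLieConf' (q : R → R → VP r R) : Prop :=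
  Bilin r R q ∧ Sesq r R q ∧ Skew' r R q ∧ Jacobi' r R q

def NovLeft1' (p : R → R → VP r R) : Prop :=
  ∀ a b c : R,
    evL r R p (FLM r R) (ev r R (FL r R) (p a b)) c -
      evR r R p (FL r R) a (ev r R (FM r R) (p b c)) =
    evL r R p (FLM r R) (ev r R (FM r R) (p b a)) c -
      evR r R p (FM r R) b (ev r R (FL r R) (p a c))

def NovLeft2' (p : R → R → VP r R) : Prop :=
  ∀ a b c : R,
    evL r R p (FLM r R) (ev r R (FL r R) (p a b)) c =
      evL r R p (FNM r R) (ev r R (FL r R) (p a c)) b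

/-- `p` is an `r`-dimensional (left) Novikov conformal algebra `λ`-product. -/
def IsNovLeft' (p : R → R → VP r R) : Prop :=
  Bilin r R p ∧ Sesq r R p ∧ NovLeft1' r R p ∧ NovLeft2' r R p

def GDCompat' (p q : R → R → VP r R) : Prop :=
  ∀ a b c : R,
    evL r R q (FNL r R) (ev r R (FNM r R) (p a b)) c +
    evL r R p (FNL r R) (ev r R (FNM r R) (q a b)) c -
    evR r R p (FNLM r R) a (ev r R (FNL r R) (q b c)) -
    evL r R q (FNM r R) (ev r R (FNL r R) (p a c)) b -
    evL r R p (FNM r R) (ev r R (FNL r R) (q a c)) b = 0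

/-- `(R, p, q)` is an `r`-dimensional Gel'fand-Dorfman conformal bialgebra. -/
def IsGDConf' (p q : R → R → VP r R) : Prop :=
  IsNovLeft' r R p ∧ IsLieConf' r R q ∧ GDCompat' r R p q

end

/-! Ordinary (non-conformal) structures on a complex vector space. -/

noncomputable section

variable (V : Type*) [AddCommGroup V] [Module ℂ V]

/-- `ℂ`-bilinearity of an ordinary product. -/
def BilinV (m : V → V → V) : Prop :=
  (∀ a b c : V, m (a + b) c = m a c + m b c) ∧
  (∀ a b c : V, m a (b + c) = m a b + m a c) ∧
  (∀ (z : ℂ) (a b : V), m (z • a) b = z • m a b) ∧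
  (∀ (z : ℂ) (a b : V), m a (z • b) = z • m a b)

def ParityPresV (G : ZMod 2 → Submodule ℂ V) (m : V → V → V) : Prop :=
  ∀ (α β : ZMod 2) (a b : V), a ∈ G α → b ∈ G β → m a b ∈ G (α + β)

/-- `br` is a Lie superalgebra bracket on `V` graded by `G`. -/
def IsLieSuper (G : ZMod 2 → Submodule ℂ V) (br : V → V → V) : Prop :=
  BilinV V br ∧ ParityPresV V G br ∧
  (∀ (α β : ZMod 2) (a b : V), a ∈ G α → b ∈ G β → br a b = -(sgn α β • br b a)) ∧
  (∀ (α β : ZMod 2) (a b : V), a ∈ G α → b ∈ G β → ∀ c : V,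
    br a (br b c) = br (br a b) c + sgn α β • br b (br a c))

/-- `m` is a (left) Novikov superalgebra product on `V` graded by `G`. -/
def IsNovSuper (G : ZMod 2 → Submodule ℂ V) (m : V → V → V) : Prop :=
  BilinV V m ∧ ParityPresV V G m ∧
  (∀ (β γ : ZMod 2) (b c : V), b ∈ G β → c ∈ G γ → ∀ a : V,
    m (m a b) c = sgn β γ • m (m a c) b) ∧
  (∀ (α β : ZMod 2) (a b : V), a ∈ G α → b ∈ G β → ∀ c : V,
    m (m a b) c - m a (m b c) = sgn α β • (m (m b a) c - m b (m a c)))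

/-- `m` is a supercommutative associative product on `V` graded by `G`. -/
def IsCommAssocSuper (G : ZMod 2 → Submodule ℂ V) (m : V → V → V) : Prop :=
  BilinV V m ∧ ParityPresV V G m ∧
  (∀ (α β : ZMod 2) (a b : V), a ∈ G α → b ∈ G β → m a b = sgn α β • m b a) ∧
  (∀ a b c : V, m (m a b) c = m a (m b c))

/-- `(V, m, dot)` is a Novikov-Poisson superalgebra. -/
def IsNovPoissonSuper (G : ZMod 2 → Submodule ℂ V) (m dot : V → V → V) : Prop :=
  IsNovSuper V G m ∧ IsCommAssocSuper V G dot ∧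
  (∀ (α β : ZMod 2) (a b : V), a ∈ G α → b ∈ G β → ∀ c : V,
    dot (m a b) c - m a (dot b c) = sgn α β • (dot (m b a) c - m b (dot a c))) ∧
  (∀ a b c : V, m (dot a b) c = dot a (m b c))

/-- `(V, br, m)` is a super Gel'fand-Dorfman bialgebra. -/
def IsGDSuper (G : ZMod 2 → Submodule ℂ V) (br m : V → V → V) : Prop :=
  IsLieSuper V G br ∧ IsNovSuper V G m ∧
  (∀ (β γ : ZMod 2) (b c : V), b ∈ G β → c ∈ G γ → ∀ a : V,
    br (m a b) c + m (br a b) c - m a (br b c) -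
      sgn β γ • br (m a c) b - sgn β γ • m (br a c) b = 0)

/-- `br` is a Lie algebra bracket on `V`. -/
def IsLieAlg (br : V → V → V) : Prop :=
  BilinV V br ∧ (∀ a b : V, br a b = -br b a) ∧
  (∀ a b c : V, br a (br b c) = br (br a b) c + br b (br a c))

/-- `m` is a (left) Novikov algebra product on `V`. -/
def IsNovAlg (m : V → V → V) : Prop :=
  BilinV V m ∧ (∀ a b c : V, m (m a b) c = m (m a c) b) ∧
  (∀ a b c : V, m (m a b) c - m a (m b c) = m (m b a) c - m b (m a c))

/-- `m` is a commutative associative product on `V`. -/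
def IsCommAssoc (m : V → V → V) : Prop :=
  BilinV V m ∧ (∀ a b : V, m a b = m b a) ∧ (∀ a b c : V, m (m a b) c = m a (m b c))

/-- `(V, m, dot)` is a Novikov-Poisson algebra. -/
def IsNovPoisson (m dot : V → V → V) : Prop :=
  IsNovAlg V m ∧ IsCommAssoc V dot ∧
  (∀ a b c : V, dot (m a b) c - m a (dot b c) = dot (m b a) c - m b (dot a c)) ∧
  (∀ a b c : V, m (dot a b) c = dot a (m b c))

/-- `(V, br, dot)` is a Lie-Poisson algebra. -/
def IsLiePoisson (br dot : V → V → V) : Prop :=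
  IsLieAlg V br ∧ IsCommAssoc V dot ∧
  (∀ a b c : V, br a (dot b c) = dot (br a b) c + dot b (br a c))

/-- `(V, br, m)` is a Gel'fand-Dorfman bialgebra. -/
def IsGD (br m : V → V → V) : Prop :=
  IsLieAlg V br ∧ IsNovAlg V m ∧
  (∀ a b c : V,
    br (m a b) c + m (br a b) c - m a (br b c) - br (m a c) b - m (br a c) b = 0)

end

/-! Free `ℂ[T₁,…,T_r]`-modules on a graded vector space. -/

noncomputable section

variable (r : ℕ) (V : Type*) [AddCommGroup V] [Module ℂ V]

/-- The free `ℂ[T₁,…,T_r]`-module `ℂ[T₁,…,T_r] ⊗ V` on the vector space `V`. -/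
abbrev TR : Type _ := MvPolynomial (Fin r) ℂ ⊗[ℂ] V

/-- The embedding of `V` into `ℂ[T₁,…,T_r] ⊗ V`. -/
def ιT : V → TR r V := fun v => (1 : MvPolynomial (Fin r) ℂ) ⊗ₜ[ℂ] v

/-- The grading of `ℂ[T₁,…,T_r] ⊗ V` induced by a grading of `V` (the `T`'s are even). -/
def TG (G : ZMod 2 → Submodule ℂ V) : ZMod 2 → Submodule ℂ (TR r V) := fun α =>
  Submodule.span ℂ {x : TR r V |
    ∃ (f : MvPolynomial (Fin r) ℂ) (v : V), v ∈ G α ∧ x = f ⊗ₜ[ℂ] v}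

end

namespace S19

noncomputable section

open Finsupp MvPolynomial CA

variable (r : ℕ)

abbrev RR := MvPolynomial (Fin r) ℂ

/-- The tautological identification of `(κ →₀ ℕ) →₀ R` with `MvPolynomial κ R`. -/
def toM {κ : Type*} : ((κ →₀ ℕ) →₀ RR r) →ₗ[ℂ] MvPolynomial κ (RR r) :=
  Finsupp.lsum ℂ fun k => ((MvPolynomial.monomial k : RR r →ₗ[RR r] MvPolynomial κ (RR r)).restrictScalars ℂ)

lemma toM_single {κ : Type*} (k : κ →₀ ℕ) (v : RR r) :
    toM r (Finsupp.single k v) = monomial k v := by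
  simp [toM]

lemma toM_eq_sum {κ : Type*} (F : (κ →₀ ℕ) →₀ RR r) :
    toM r F = F.sum fun k v => monomial k v := by
  simp [toM, Finsupp.lsum_apply]

lemma coeff_toM {κ : Type*} (F : (κ →₀ ℕ) →₀ RR r) (k : κ →₀ ℕ) :
    coeff k (toM r F) = F k := by
  classical
  rw [toM_eq_sum, Finsupp.sum, MvPolynomial.coeff_sum]
  simp only [coeff_monomial]
  rw [Finset.sum_ite_eq' F.support k (fun x => F x)]
  by_cases h : k ∈ F.support
  · simp [h]
  · simp [h, Finsupp.notMem_support_iff.mp h]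

def ofM {κ : Type*} (p : MvPolynomial κ (RR r)) : (κ →₀ ℕ) →₀ RR r :=
  ⟨p.support, fun k => coeff k p, fun k => MvPolynomial.mem_support_iff⟩

lemma ofM_apply {κ : Type*} (p : MvPolynomial κ (RR r)) (k : κ →₀ ℕ) :
    ofM r p k = coeff k p := rfl

lemma ofM_toM {κ : Type*} (F : (κ →₀ ℕ) →₀ RR r) : ofM r (toM r F) = F := by
  ext k; rw [ofM_apply, coeff_toM]

lemma toM_ofM {κ : Type*} (p : MvPolynomial κ (RR r)) : toM r (ofM r p) = p := by
  apply MvPolynomial.ext; intro k; rw [coeff_toM, ofM_apply]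

lemma toM_inj {κ : Type*} : Function.Injective (toM r (κ := κ)) := fun a b h => by
  rw [← ofM_toM r a, h, ofM_toM]

lemma ofM_add {κ : Type*} (p q : MvPolynomial κ (RR r)) :
    ofM r (p + q) = ofM r p + ofM r q := by
  apply toM_inj; rw [map_add, toM_ofM, toM_ofM, toM_ofM]

lemma ofM_zero {κ : Type*} : ofM r (0 : MvPolynomial κ (RR r)) = 0 := by
  apply toM_inj; rw [toM_ofM, map_zero]

section
variable {r : ℕ} {κ : Type*}

lemma pow_int {sop : Module.End ℂ ((κ →₀ ℕ) →₀ RR r)} {t : MvPolynomial κ (RR r)}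
    (h : ∀ G, toM r (sop G) = t * toM r G) (n : ℕ) (G : (κ →₀ ℕ) →₀ RR r) :
    toM r ((sop ^ n) G) = t ^ n * toM r G := by
  induction n with
  | zero => simp
  | succ n ih =>
    rw [pow_succ', Module.End.mul_apply, h, ih, pow_succ']
    ring

lemma list_int (l : List (Module.End ℂ ((κ →₀ ℕ) →₀ RR r) × MvPolynomial κ (RR r)))
    (h : ∀ p ∈ l, ∀ G, toM r (p.1 G) = p.2 * toM r G) (G : (κ →₀ ℕ) →₀ RR r) :
    toM r ((l.map Prod.fst).prod G) = (l.map Prod.snd).prod * toM r G := by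
  induction l generalizing G with
  | nil => simp
  | cons hd tl ih =>
    simp only [List.map_cons, List.prod_cons, Module.End.mul_apply]
    rw [h hd (by simp), ih (fun p hp => h p (by simp [hp])), mul_assoc]

lemma prod_X_pow (k : κ →₀ ℕ) :
    (k.prod fun n e => (X n : MvPolynomial κ (RR r)) ^ e) = monomial k 1 := by
  rw [monomial_eq, map_one, one_mul]

lemma sum_ops_eq (sop : Fin r → Module.End ℂ ((κ →₀ ℕ) →₀ RR r))
    (t : Fin r → MvPolynomial κ (RR r))
    (h : ∀ i G, toM r (sop i G) = t i * toM r G) (F : (Fin r →₀ ℕ) →₀ RR r) :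
    toM r (F.sum fun k v => ((List.ofFn fun i : Fin r => (sop i) ^ (k i)).prod)
        (Finsupp.single 0 v)) =
      eval₂ MvPolynomial.C t (toM r F) := by
  rw [map_finsuppSum, toM_eq_sum r F, Finsupp.sum, Finsupp.sum, ← coe_eval₂Hom, map_sum]
  apply Finset.sum_congr rfl
  intro k _
  have key : toM r ((List.ofFn fun i : Fin r => (sop i) ^ (k i)).prod (Finsupp.single 0 (F k)))
      = (List.ofFn fun i : Fin r => (t i) ^ (k i)).prod * toM r (Finsupp.single 0 (F k)) := by
    have := list_int (List.ofFn fun i : Fin r => ((sop i) ^ (k i), (t i) ^ (k i)))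
      (by
        intro p hp G
        rw [List.mem_ofFn] at hp
        obtain ⟨i, hi⟩ := hp
        subst hi
        exact pow_int (h i) (k i) G)
      (Finsupp.single 0 (F k))
    simpa [List.map_ofFn, Function.comp_def] using this
  rw [key, toM_single, ← C_apply, coe_eval₂Hom, eval₂_monomial, List.prod_ofFn,
    ← Finsupp.prod_pow, mul_comm]
end
section
open CA
variable {r : ℕ}

lemma toM_vLam (i : Fin r) (F : VP r (RR r)) :
    toM r (vLam r (RR r) i F) = X i * toM r F := by
  induction F using Finsupp.induction with
  | zero => simp [vLam]
  | single_add k v F hk hv ih =>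
    simp only [map_add, mul_add, ih]
    congr 1
    rw [vLam, Finsupp.lmapDomain_apply, Finsupp.mapDomain_single, toM_single, toM_single,
      X, monomial_mul, one_mul, add_comm]

lemma toM_vT (i : Fin r) (F : VP r (RR r)) :
    toM r (vT r (RR r) i F) = MvPolynomial.C (X i) * toM r F := by
  induction F using Finsupp.induction with
  | zero => simp [vT]
  | single_add k v F hk hv ih =>
    simp only [map_add, mul_add, ih]
    congr 1
    rw [vT, Finsupp.mapRange.linearMap_apply, Finsupp.mapRange_single, toM_single, toM_single,
      C_mul_monomial]
    simp [tAct, smul_eq_mul]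

lemma toM_bShift (e : (Fin r ⊕ Fin r) →₀ ℕ) (F : BP r (RR r)) :
    toM r (bShift r (RR r) e F) = monomial e 1 * toM r F := by
  induction F using Finsupp.induction with
  | zero => simp [bShift]
  | single_add k v F hk hv ih =>
    simp only [map_add, mul_add, ih]
    congr 1
    rw [bShift, Finsupp.lmapDomain_apply, Finsupp.mapDomain_single, toM_single, toM_single,
      monomial_mul, one_mul, add_comm]

lemma toM_bLam (i : Fin r) (F : BP r (RR r)) :
    toM r (bLam r (RR r) i F) = X (Sum.inl i) * toM r F := by
  rw [bLam, toM_bShift, X]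

lemma toM_bMu (i : Fin r) (F : BP r (RR r)) :
    toM r (bMu r (RR r) i F) = X (Sum.inr i) * toM r F := by
  rw [bMu, toM_bShift, X]

lemma toM_bT (i : Fin r) (F : BP r (RR r)) :
    toM r (bT r (RR r) i F) = MvPolynomial.C (X i) * toM r F := by
  induction F using Finsupp.induction with
  | zero => simp [bT]
  | single_add k v F hk hv ih =>
    simp only [map_add, mul_add, ih]
    congr 1
    rw [bT, Finsupp.mapRange.linearMap_apply, Finsupp.mapRange_single, toM_single, toM_single,
      C_mul_monomial]
    simp [tAct, smul_eq_mul]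

/-- substitution homs -/
def psi {κ : Type*} (t : Fin r → MvPolynomial κ (RR r)) :
    MvPolynomial (Fin r) (RR r) →+* MvPolynomial κ (RR r) :=
  eval₂Hom MvPolynomial.C t

lemma toM_ev (sop : Fin r → Module.End ℂ (BP r (RR r)))
    (t : Fin r → MvPolynomial (Fin r ⊕ Fin r) (RR r))
    (h : ∀ i G, toM r (sop i G) = t i * toM r G) (F : VP r (RR r)) :
    toM r (ev r (RR r) sop F) = psi t (toM r F) := by
  rw [ev]
  exact sum_ops_eq sop t h F

lemma toM_vNeg (F : VP r (RR r)) :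
    toM r (vNeg r (RR r) F) =
      psi (fun i => -X i - MvPolynomial.C (X i)) (toM r F) := by
  rw [vNeg]
  refine sum_ops_eq _ _ (fun i G => ?_) F
  rw [LinearMap.sub_apply, LinearMap.neg_apply, map_sub, map_neg, toM_vLam, toM_vT]
  ring

lemma ev_add (sop : Fin r → Module.End ℂ (BP r (RR r))) (F F' : VP r (RR r)) :
    ev r (RR r) sop (F + F') = ev r (RR r) sop F + ev r (RR r) sop F' := by
  rw [ev, ev, ev]
  apply Finsupp.sum_add_index'
  · intro k; simp
  · intro k v v'; rw [Finsupp.single_add, map_add]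
end
section
variable {r : ℕ}

def CChom (κ : Type*) : ℂ →+* MvPolynomial κ (RR r) :=
  (MvPolynomial.C : RR r →+* MvPolynomial κ (RR r)).comp (MvPolynomial.C : ℂ →+* RR r)

def Amap : RR r →+* MvPolynomial (Fin r) (RR r) :=
  eval₂Hom (CChom (Fin r)) (fun i => -X i)

def Bmap : RR r →+* MvPolynomial (Fin r) (RR r) :=
  eval₂Hom (CChom (Fin r)) (fun i => X i + MvPolynomial.C (X i))

lemma smul_eq_CC_mul {κ : Type*} (z : ℂ) (p : MvPolynomial κ (RR r)) :
    z • p = MvPolynomial.C (MvPolynomial.C z) * p := by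
  rw [Algebra.smul_def]
  congr 1

lemma ofM_smul {κ : Type*} (z : ℂ) (p : MvPolynomial κ (RR r)) :
    ofM r (z • p) = z • ofM r p := by
  ext k
  rw [ofM_apply, Finsupp.smul_apply, ofM_apply, MvPolynomial.coeff_smul]

lemma Amap_smul (z : ℂ) (a : RR r) : Amap (z • a) = z • Amap a := by
  rw [smul_eq_C_mul, map_mul, smul_eq_CC_mul]
  congr 1
  rw [Amap, eval₂Hom_C]
  rfl

lemma Bmap_smul (z : ℂ) (a : RR r) : Bmap (z • a) = z • Bmap a := by
  rw [smul_eq_C_mul, map_mul, smul_eq_CC_mul]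
  congr 1
  rw [Bmap, eval₂Hom_C]
  rfl
end
section
variable (s : ℕ)

def i1 (i : Fin s) : Fin (2 * s) := ⟨i.val, Nat.lt_of_lt_of_le i.isLt (by omega)⟩
def i2 (i : Fin s) : Fin (2 * s) := ⟨s + i.val, Nat.lt_of_lt_of_le (Nat.add_lt_add_left i.isLt s) (by omega)⟩

def Bf {S : Type*} [CommRing S] (x y : Fin (2 * s) → S) : S :=
  ∑ i : Fin s, (x (i2 s i) * y (i1 s i) - x (i1 s i) * y (i2 s i))

variable {S : Type*} [CommRing S] {S' : Type*} [CommRing S']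

lemma map_Bf (f : S →+* S') (x y : Fin (2 * s) → S) :
    f (Bf s x y) = Bf s (fun j => f (x j)) (fun j => f (y j)) := by
  simp [Bf]

lemma Bf_add_right (x y z : Fin (2 * s) → S) :
    Bf s x (fun j => y j + z j) = Bf s x y + Bf s x z := by
  rw [Bf, Bf, Bf, ← Finset.sum_add_distrib]
  apply Finset.sum_congr rfl
  intros; ring

lemma Bf_add_left (x y z : Fin (2 * s) → S) :
    Bf s (fun j => x j + y j) z = Bf s x z + Bf s y z := by
  rw [Bf, Bf, Bf, ← Finset.sum_add_distrib]
  apply Finset.sum_congr rfl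
  intros; ring

lemma Bf_neg_right (x y : Fin (2 * s) → S) :
    Bf s x (fun j => -y j) = -Bf s x y := by
  rw [Bf, Bf, ← Finset.sum_neg_distrib]
  apply Finset.sum_congr rfl
  intros; ring

lemma Bf_neg_left (x y : Fin (2 * s) → S) :
    Bf s (fun j => -x j) y = -Bf s x y := by
  rw [Bf, Bf, ← Finset.sum_neg_distrib]
  apply Finset.sum_congr rfl
  intros; ring

lemma Bf_self (x : Fin (2 * s) → S) : Bf s x x = 0 := by
  rw [Bf]
  apply Finset.sum_eq_zero
  intros; ring

lemma Bf_swap (x y : Fin (2 * s) → S) : Bf s y x = -Bf s x y := by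
  rw [Bf, Bf, ← Finset.sum_neg_distrib]
  apply Finset.sum_congr rfl
  intros; ring
end
section
open CA
variable (s : ℕ)

def Pv : MvPolynomial (Fin (2 * s)) (RR (2 * s)) :=
  Bf s (fun j => X j) (fun j => MvPolynomial.C (X j))

def Qb (a b : RR (2 * s)) : VP (2 * s) (RR (2 * s)) :=
  ofM (2 * s) (Amap a * Bmap b * Pv s)

lemma toM_Qb (a b : RR (2 * s)) :
    toM (2 * s) (Qb s a b) = Amap a * Bmap b * Pv s := toM_ofM _ _

lemma Qb_bilin : Bilin (2 * s) (RR (2 * s)) (Qb s) := by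
  refine ⟨fun a b c => ?_, fun a b c => ?_, fun z a b => ?_, fun z a b => ?_⟩
  · apply toM_inj
    rw [map_add, toM_Qb, toM_Qb, toM_Qb, map_add]
    ring
  · apply toM_inj
    rw [map_add, toM_Qb, toM_Qb, toM_Qb, map_add]
    ring
  · apply toM_inj
    rw [map_smul, toM_Qb, toM_Qb, Amap_smul, smul_eq_CC_mul, smul_eq_CC_mul]
    ring
  · apply toM_inj
    rw [map_smul, toM_Qb, toM_Qb, Bmap_smul, smul_eq_CC_mul, smul_eq_CC_mul]
    ring

lemma Amap_X (i : Fin (2 * s)) : Amap (X i : RR (2 * s)) = -X i := by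
  rw [Amap, eval₂Hom_X']

lemma Bmap_X (i : Fin (2 * s)) :
    Bmap (X i : RR (2 * s)) = X i + MvPolynomial.C (X i) := by
  rw [Bmap, eval₂Hom_X']

lemma Qb_sesq : Sesq (2 * s) (RR (2 * s)) (Qb s) := by
  intro i a b
  constructor
  · apply toM_inj
    rw [toM_Qb, LinearMap.neg_apply, map_neg, toM_vLam, toM_Qb, smul_eq_mul, map_mul, Amap_X]
    ring
  · apply toM_inj
    rw [toM_Qb, LinearMap.add_apply, map_add, toM_vLam, toM_vT, toM_Qb, smul_eq_mul,
      map_mul, Bmap_X]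
    ring
end
section
open CA
variable (s : ℕ)

def phiN : MvPolynomial (Fin (2 * s)) (RR (2 * s)) →+* MvPolynomial (Fin (2 * s)) (RR (2 * s)) :=
  psi (fun i => -X i - MvPolynomial.C (X i))

lemma psi_C {r : ℕ} {κ : Type*} (t : Fin r → MvPolynomial κ (RR r)) (a : RR r) :
    psi t (MvPolynomial.C a) = MvPolynomial.C a := by
  rw [psi, eval₂Hom_C]

lemma psi_X {r : ℕ} {κ : Type*} (t : Fin r → MvPolynomial κ (RR r)) (i : Fin r) :
    psi t (X i) = t i := by
  rw [psi, eval₂Hom_X']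

lemma phiN_Amap (a : RR (2 * s)) : phiN s (Amap a) = Bmap a := by
  have : (phiN s).comp Amap = (Bmap : RR (2 * s) →+* _) := by
    apply MvPolynomial.ringHom_ext
    · intro z
      rw [RingHom.comp_apply]
      show phiN s (Amap (MvPolynomial.C z)) = Bmap (MvPolynomial.C z)
      rw [Amap, eval₂Hom_C, Bmap, eval₂Hom_C]
      show phiN s (MvPolynomial.C (MvPolynomial.C z)) = _
      rw [phiN, psi_C]
      rfl
    · intro i
      rw [RingHom.comp_apply]
      show phiN s (Amap (X i)) = Bmap (X i)
      rw [Amap_X, Bmap_X, map_neg, phiN, psi_X]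
      ring
  exact RingHom.congr_fun this a

lemma phiN_Bmap (a : RR (2 * s)) : phiN s (Bmap a) = Amap a := by
  have : (phiN s).comp Bmap = (Amap : RR (2 * s) →+* _) := by
    apply MvPolynomial.ringHom_ext
    · intro z
      rw [RingHom.comp_apply]
      show phiN s (Bmap (MvPolynomial.C z)) = Amap (MvPolynomial.C z)
      rw [Amap, eval₂Hom_C, Bmap, eval₂Hom_C]
      show phiN s (MvPolynomial.C (MvPolynomial.C z)) = _
      rw [phiN, psi_C]
      rfl
    · intro i
      rw [RingHom.comp_apply]
      show phiN s (Bmap (X i)) = Amap (X i)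
      rw [Amap_X, Bmap_X, map_add, phiN, psi_X, psi_C]
      ring
  exact RingHom.congr_fun this a

lemma phiN_Pv : phiN s (Pv s) = -Pv s := by
  rw [Pv, map_Bf]
  have hx : (fun j => phiN s (X j)) = fun j : Fin (2 * s) =>
      -X j + -(MvPolynomial.C (X j) : MvPolynomial (Fin (2 * s)) (RR (2 * s))) := by
    funext j
    rw [phiN, psi_X]
    ring
  have hc : (fun j => phiN s (MvPolynomial.C (X j))) = fun j : Fin (2 * s) =>
      (MvPolynomial.C (X j) : MvPolynomial (Fin (2 * s)) (RR (2 * s))) := by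
    funext j
    rw [phiN, psi_C]
  rw [hx, hc, Bf_add_left, Bf_neg_left, Bf_neg_left, Bf_self]
  ring

lemma Qb_skew : Skew' (2 * s) (RR (2 * s)) (Qb s) := by
  intro a b
  apply toM_inj
  rw [toM_Qb, map_neg, toM_vNeg, toM_Qb]
  show _ = -(phiN s _)
  rw [map_mul, map_mul, phiN_Amap, phiN_Bmap, phiN_Pv]
  ring
end
section
open CA
variable (s : ℕ)

lemma Qb_zero_right (a : RR (2 * s)) : Qb s a 0 = 0 := by
  apply toM_inj
  rw [toM_Qb, map_zero, map_zero]
  ring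

lemma Qb_zero_left (b : RR (2 * s)) : Qb s 0 b = 0 := by
  apply toM_inj
  rw [toM_Qb, map_zero, map_zero]
  ring

lemma ev_zero (sop : Fin (2 * s) → Module.End ℂ (BP (2 * s) (RR (2 * s)))) :
    ev (2 * s) (RR (2 * s)) sop 0 = 0 := by
  rw [ev, Finsupp.sum_zero_index]

lemma toM_evR (sop : Fin (2 * s) → Module.End ℂ (BP (2 * s) (RR (2 * s))))
    (t : Fin (2 * s) → MvPolynomial (Fin (2 * s) ⊕ Fin (2 * s)) (RR (2 * s)))
    (h : ∀ i G, toM (2 * s) (sop i G) = t i * toM (2 * s) G)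
    (a : RR (2 * s)) (G : BP (2 * s) (RR (2 * s))) :
    toM (2 * s) (evR (2 * s) (RR (2 * s)) (Qb s) sop a G) =
      psi t (Amap a * Pv s) *
        eval₂ ((psi t).comp (Bmap : RR (2 * s) →+* _)) X (toM (2 * s) G) := by
  induction G using Finsupp.induction with
  | zero =>
    rw [evR, Finsupp.sum_zero_index, map_zero, eval₂_zero, mul_zero]
  | single_add e w G he hw ih =>
    rw [evR] at ih ⊢
    rw [Finsupp.sum_add_index' (fun e => by rw [Qb_zero_right, ev_zero, map_zero])
      (fun e w w' => by rw [(Qb_bilin s).2.1, ev_add, map_add])]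
    rw [map_add, ih, map_add, eval₂_add, mul_add]
    refine congrArg (· + _) ?_
    rw [Finsupp.sum_single_index (by rw [Qb_zero_right, ev_zero, map_zero])]
    rw [toM_bShift, toM_ev sop t h, toM_Qb, toM_single, eval₂_monomial, prod_X_pow]
    rw [RingHom.comp_apply, map_mul, map_mul, map_mul]
    ring

lemma toM_evL (sop : Fin (2 * s) → Module.End ℂ (BP (2 * s) (RR (2 * s))))
    (t : Fin (2 * s) → MvPolynomial (Fin (2 * s) ⊕ Fin (2 * s)) (RR (2 * s)))
    (h : ∀ i G, toM (2 * s) (sop i G) = t i * toM (2 * s) G)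
    (b : RR (2 * s)) (G : BP (2 * s) (RR (2 * s))) :
    toM (2 * s) (evL (2 * s) (RR (2 * s)) (Qb s) sop G b) =
      psi t (Bmap b * Pv s) *
        eval₂ ((psi t).comp (Amap : RR (2 * s) →+* _)) X (toM (2 * s) G) := by
  induction G using Finsupp.induction with
  | zero =>
    rw [evL, Finsupp.sum_zero_index, map_zero, eval₂_zero, mul_zero]
  | single_add e w G he hw ih =>
    rw [evL] at ih ⊢
    rw [Finsupp.sum_add_index' (fun e => by rw [Qb_zero_left, ev_zero, map_zero])
      (fun e w w' => by rw [(Qb_bilin s).1, ev_add, map_add])]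
    rw [map_add, ih, map_add, eval₂_add, mul_add]
    refine congrArg (· + _) ?_
    rw [Finsupp.sum_single_index (by rw [Qb_zero_left, ev_zero, map_zero])]
    rw [toM_bShift, toM_ev sop t h, toM_Qb, toM_single, eval₂_monomial, prod_X_pow]
    rw [RingHom.comp_apply, map_mul, map_mul, map_mul]
    ring
end
section
open CA
variable (s : ℕ)

abbrev BPM := MvPolynomial (Fin (2 * s) ⊕ Fin (2 * s)) (RR (2 * s))

def vLa (j : Fin (2 * s)) : BPM s := X (Sum.inl j)
def vMu (j : Fin (2 * s)) : BPM s := X (Sum.inr j)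
def vTe (j : Fin (2 * s)) : BPM s := MvPolynomial.C (X j)

/-- a ↦ a(-λ) -/
def HA : RR (2 * s) →+* BPM s := eval₂Hom (CChom _) (fun i => -vLa s i)
/-- b ↦ b(-μ) -/
def HB : RR (2 * s) →+* BPM s := eval₂Hom (CChom _) (fun i => -vMu s i)
/-- c ↦ c(λ+μ+T) -/
def HC : RR (2 * s) →+* BPM s := eval₂Hom (CChom _) (fun i => vLa s i + vMu s i + vTe s i)

def chi1 : MvPolynomial (Fin (2 * s)) (RR (2 * s)) →+* BPM s :=
  (eval₂Hom ((psi (fun i => vLa s i)).comp Bmap) X).comp (psi (fun i => vMu s i))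

def chi2 : MvPolynomial (Fin (2 * s)) (RR (2 * s)) →+* BPM s :=
  (eval₂Hom ((psi (fun i => vLa s i + vMu s i)).comp Amap) X).comp (psi (fun i => vLa s i))

def chi3 : MvPolynomial (Fin (2 * s)) (RR (2 * s)) →+* BPM s :=
  (eval₂Hom ((psi (fun i => vMu s i)).comp Bmap) X).comp (psi (fun i => vLa s i))

lemma psiL_Amap : ((psi (fun i => vLa s i)).comp (Amap : RR (2 * s) →+* _)) = HA s := by
  apply MvPolynomial.ringHom_ext
  · intro z; simp [Amap, psi, CChom, HA]
  · intro i; simp [Amap, psi, CChom, HA]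

lemma psiLM_Bmap :
    ((psi (fun i => vLa s i + vMu s i)).comp (Bmap : RR (2 * s) →+* _)) = HC s := by
  apply MvPolynomial.ringHom_ext
  · intro z; simp [Bmap, psi, CChom, HC]
  · intro i; simp [Bmap, psi, CChom, HC, vTe]

lemma psiM_Amap : ((psi (fun i => vMu s i)).comp (Amap : RR (2 * s) →+* _)) = HB s := by
  apply MvPolynomial.ringHom_ext
  · intro z; simp [Amap, psi, CChom, HB]
  · intro i; simp [Amap, psi, CChom, HB]

lemma chi1_Amap : (chi1 s).comp (Amap : RR (2 * s) →+* _) = HB s := by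
  apply MvPolynomial.ringHom_ext
  · intro z; simp [chi1, Amap, Bmap, psi, CChom, HB, vLa, vMu, vTe, bind₂_X_right]
    try ring
  · intro i; simp [chi1, Amap, Bmap, psi, CChom, HB, vLa, vMu, vTe, bind₂_X_right]
    try ring

lemma chi1_Bmap : (chi1 s).comp (Bmap : RR (2 * s) →+* _) = HC s := by
  apply MvPolynomial.ringHom_ext
  · intro z; simp [chi1, Amap, Bmap, psi, CChom, HC, vLa, vMu, vTe, bind₂_X_right]
    try ring
  · intro i; simp [chi1, Amap, Bmap, psi, CChom, HC, vLa, vMu, vTe, bind₂_X_right]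
    try ring

lemma chi2_Amap : (chi2 s).comp (Amap : RR (2 * s) →+* _) = HA s := by
  apply MvPolynomial.ringHom_ext
  · intro z; simp [chi2, Amap, Bmap, psi, CChom, HA, vLa, vMu, vTe, bind₂_X_right]
    try ring
  · intro i; simp [chi2, Amap, Bmap, psi, CChom, HA, vLa, vMu, vTe, bind₂_X_right]
    try ring

lemma chi2_Bmap : (chi2 s).comp (Bmap : RR (2 * s) →+* _) = HB s := by
  apply MvPolynomial.ringHom_ext
  · intro z; simp [chi2, Amap, Bmap, psi, CChom, HB, vLa, vMu, vTe, bind₂_X_right]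
    try ring
  · intro i; simp [chi2, Amap, Bmap, psi, CChom, HB, vLa, vMu, vTe, bind₂_X_right]
    try ring

lemma chi3_Amap : (chi3 s).comp (Amap : RR (2 * s) →+* _) = HA s := by
  apply MvPolynomial.ringHom_ext
  · intro z; simp [chi3, Amap, Bmap, psi, CChom, HA, vLa, vMu, vTe, bind₂_X_right]
    try ring
  · intro i; simp [chi3, Amap, Bmap, psi, CChom, HA, vLa, vMu, vTe, bind₂_X_right]
    try ring

lemma chi3_Bmap : (chi3 s).comp (Bmap : RR (2 * s) →+* _) = HC s := by
  apply MvPolynomial.ringHom_ext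
  · intro z; simp [chi3, Amap, Bmap, psi, CChom, HC, vLa, vMu, vTe, bind₂_X_right]
    try ring
  · intro i; simp [chi3, Amap, Bmap, psi, CChom, HC, vLa, vMu, vTe, bind₂_X_right]
    try ring

lemma psiL_Pv : psi (fun i => vLa s i) (Pv s) = Bf s (vLa s) (vTe s) := by
  rw [Pv, map_Bf]
  congr 1 <;> funext j
  · rw [psi_X]
  · rw [psi_C]; rfl

lemma psiM_Pv : psi (fun i => vMu s i) (Pv s) = Bf s (vMu s) (vTe s) := by
  rw [Pv, map_Bf]
  congr 1 <;> funext j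
  · rw [psi_X]
  · rw [psi_C]; rfl

lemma psiLM_Pv : psi (fun i => vLa s i + vMu s i) (Pv s) =
    Bf s (fun j => vLa s j + vMu s j) (vTe s) := by
  rw [Pv, map_Bf]
  congr 1 <;> funext j
  · rw [psi_X]
  · rw [psi_C]; rfl

lemma chi1_Pv : chi1 s (Pv s) = Bf s (vMu s) (fun j => vLa s j + vTe s j) := by
  rw [Pv, map_Bf]
  congr 1 <;> funext j
  · show chi1 s (X j) = _
    simp [chi1, psi, vMu]
  · show chi1 s (MvPolynomial.C (X j)) = _
    simp [chi1, psi, Bmap, CChom, vLa, vTe]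

lemma chi2_Pv : chi2 s (Pv s) = Bf s (vLa s) (fun j => -vLa s j + -vMu s j) := by
  rw [Pv, map_Bf]
  congr 1 <;> funext j
  · show chi2 s (X j) = _
    simp [chi2, psi, vLa]
  · show chi2 s (MvPolynomial.C (X j)) = _
    simp [chi2, psi, Amap, CChom, vLa, vMu]
    ring

lemma chi3_Pv : chi3 s (Pv s) = Bf s (vLa s) (fun j => vMu s j + vTe s j) := by
  rw [Pv, map_Bf]
  congr 1 <;> funext j
  · show chi3 s (X j) = _
    simp [chi3, psi, vLa]
  · show chi3 s (MvPolynomial.C (X j)) = _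
    simp [chi3, psi, Bmap, CChom, vMu, vTe]
end
section
open CA
variable (s : ℕ)

lemma chi1_apply (p : MvPolynomial (Fin (2 * s)) (RR (2 * s))) :
    eval₂ ((psi (fun i => vLa s i)).comp (Bmap : RR (2 * s) →+* _)) X
      (psi (fun i => vMu s i) p) = chi1 s p := rfl

lemma chi2_apply (p : MvPolynomial (Fin (2 * s)) (RR (2 * s))) :
    eval₂ ((psi (fun i => vLa s i + vMu s i)).comp (Amap : RR (2 * s) →+* _)) X
      (psi (fun i => vLa s i) p) = chi2 s p := rfl

lemma chi3_apply (p : MvPolynomial (Fin (2 * s)) (RR (2 * s))) :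
    eval₂ ((psi (fun i => vMu s i)).comp (Bmap : RR (2 * s) →+* _)) X
      (psi (fun i => vLa s i) p) = chi3 s p := rfl

lemma hFL : ∀ (i : Fin (2 * s)) G,
    toM (2 * s) (FL (2 * s) (RR (2 * s)) i G) = vLa s i * toM (2 * s) G := by
  intro i G
  show toM (2 * s) (bLam (2 * s) (RR (2 * s)) i G) = _
  rw [toM_bLam]; rfl

lemma hFM : ∀ (i : Fin (2 * s)) G,
    toM (2 * s) (FM (2 * s) (RR (2 * s)) i G) = vMu s i * toM (2 * s) G := by
  intro i G
  show toM (2 * s) (bMu (2 * s) (RR (2 * s)) i G) = _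
  rw [toM_bMu]; rfl

lemma hFLM : ∀ (i : Fin (2 * s)) G,
    toM (2 * s) (FLM (2 * s) (RR (2 * s)) i G) = (vLa s i + vMu s i) * toM (2 * s) G := by
  intro i G
  show toM (2 * s) ((bLam (2 * s) (RR (2 * s)) i + bMu (2 * s) (RR (2 * s)) i) G) = _
  rw [LinearMap.add_apply, map_add, toM_bLam, toM_bMu, ← add_mul]; rfl

lemma Qb_jacobi : Jacobi' (2 * s) (RR (2 * s)) (Qb s) := by
  intro a b c
  apply toM_inj
  rw [map_add,
    toM_evR s _ _ (hFL s) a _, toM_evL s _ _ (hFLM s) c _, toM_evR s _ _ (hFM s) b _,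
    toM_ev _ _ (hFM s), toM_ev _ _ (hFL s), toM_ev _ _ (hFL s),
    toM_Qb, toM_Qb, toM_Qb,
    chi1_apply, chi2_apply, chi3_apply]
  simp only [map_mul]
  have e1 := RingHom.congr_fun (psiL_Amap s) a
  have e2 := RingHom.congr_fun (psiLM_Bmap s) c
  have e3 := RingHom.congr_fun (psiM_Amap s) b
  have e4 := RingHom.congr_fun (chi1_Amap s) b
  have e5 := RingHom.congr_fun (chi1_Bmap s) c
  have e6 := RingHom.congr_fun (chi2_Amap s) a
  have e7 := RingHom.congr_fun (chi2_Bmap s) b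
  have e8 := RingHom.congr_fun (chi3_Amap s) a
  have e9 := RingHom.congr_fun (chi3_Bmap s) c
  simp only [RingHom.comp_apply] at e1 e2 e3 e4 e5 e6 e7 e8 e9
  rw [e1, e2, e3, e4, e5, e6, e7, e8, e9,
    psiL_Pv, psiM_Pv, psiLM_Pv, chi1_Pv, chi2_Pv, chi3_Pv,
    Bf_add_right, Bf_add_right, Bf_add_right, Bf_add_left,
    Bf_neg_right, Bf_neg_right, Bf_self,
    Bf_swap s (vLa s) (vMu s)]
  ring
end
end

end S19

/-- Let `r = 2s` with `s ≥ 1` and let `R = ℂ[T₁,…,T_r] L` be the free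
`ℂ[T₁,…,T_r]`-module on one generator `L` (encoded as `ℂ[T₁,…,T_{2s}]` itself with
`L = 1`). The `λ`-bracket determined by
`[L_λ L] = Σ_{i=1}^s (λ_{s+i} T_i L − λ_i T_{s+i} L)`, extended by conformal
sesquilinearity, makes `R` a `2s`-dimensional Lie conformal algebra. -/
theorem statement_19 (s : ℕ) (hs : 1 ≤ s) :
    ∃ Q : MvPolynomial (Fin (2 * s)) ℂ → MvPolynomial (Fin (2 * s)) ℂ →
        VP (2 * s) (MvPolynomial (Fin (2 * s)) ℂ),
      IsLieConf' (2 * s) (MvPolynomial (Fin (2 * s)) ℂ) Q ∧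
      Q 1 1 = ∑ i : Fin s,
        (Finsupp.single
            (Finsupp.single (⟨s + i.val, by have := i.isLt; omega⟩ : Fin (2 * s)) 1)
            ((X (⟨i.val, by have := i.isLt; omega⟩ : Fin (2 * s)) :
                MvPolynomial (Fin (2 * s)) ℂ) • (1 : MvPolynomial (Fin (2 * s)) ℂ)) -
         Finsupp.single
            (Finsupp.single (⟨i.val, by have := i.isLt; omega⟩ : Fin (2 * s)) 1)
            ((X (⟨s + i.val, by have := i.isLt; omega⟩ : Fin (2 * s)) :
                MvPolynomial (Fin (2 * s)) ℂ) • (1 : MvPolynomial (Fin (2 * s)) ℂ))) := by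
  refine ⟨S19.Qb s, ⟨S19.Qb_bilin s, S19.Qb_sesq s, S19.Qb_skew s, S19.Qb_jacobi s⟩, ?_⟩
  apply S19.toM_inj (2 * s)
  rw [S19.toM_Qb, map_one, map_one, one_mul, one_mul, map_sum, S19.Pv, S19.Bf]
  have hm : ∀ (j m : Fin (2 * s)),
      (X j : MvPolynomial (Fin (2 * s)) (S19.RR (2 * s))) * MvPolynomial.C (X m) =
        monomial (Finsupp.single j 1) (X m) := by
    intro j m
    rw [X, C_apply, monomial_mul]
    simp
  apply Finset.sum_congr rfl
  intro i _
  rw [map_sub, S19.toM_single, S19.toM_single, smul_eq_mul, mul_one, smul_eq_mul, mul_one,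
    hm, hm]
  rfl
end CA
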